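/- Let A_1, …, A_n be nonempty words with R(A_1) ≤ … ≤ R(A_n). Then for every permutation π, the concatenation A_{π(1)}⋯A_{π(n)} is lexicographically less than or equal to A_n A_{n-1} ⋯ A_1. -/

import Mathlib

/-- `wpow A n` is the `n`-fold concatenation `A^n` of the word `A`. -/
def wpow {α : Type*} (A : List α) : ℕ → List α
  | 0 => []
  | n + 1 => A ++ wpow A n


/-- `R A` is the infinite periodic word `AAA⋯`: `R A i = A (i % |A|)`. -/
def R {α : Type*} [Inhabited α] (A : List α) : ℕ → α :=
  fun i => A.getD (i % A.length) default

/-- Strict lexicographic order on infinite words. -/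
def InfLt {α : Type*} [LinearOrder α] (f g : ℕ → α) : Prop :=
  ∃ i, (∀ j < i, f j = g j) ∧ f i < g i

/-- Lexicographic (non-strict) order on infinite words. -/
def InfLe {α : Type*} [LinearOrder α] (f g : ℕ → α) : Prop :=
  f = g ∨ InfLt f g

section aux
variable {α : Type*} [LinearOrder α] [Inhabited α]

/-- Pointwise: list equality from getD agreement. -/
lemma eq_of_getD_eq {l₁ l₂ : List α} (hlen : l₁.length = l₂.length)
    (h : ∀ j < l₁.length, l₁.getD j default = l₂.getD j default) : l₁ = l₂ := by
  apply List.ext_getElem hlen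
  intro i h1 h2
  have := h i h1
  rwa [List.getD_eq_getElem _ _ h1, List.getD_eq_getElem _ _ h2] at this

/-- Strict lex from first-difference data. -/
lemma lt_of_getD (i : ℕ) : ∀ (l₁ l₂ : List α), i < l₁.length → i < l₂.length →
    (∀ j < i, l₁.getD j default = l₂.getD j default) →
    l₁.getD i default < l₂.getD i default → l₁ < l₂ := by
  induction i with
  | zero =>
    intro l₁ l₂ h1 h2 _ hlt
    match l₁, l₂ with
    | a :: s, b :: t =>
      exact List.Lex.rel (by simpa using hlt)
  | succ i ih =>
    intro l₁ l₂ h1 h2 heq hlt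
    match l₁, l₂ with
    | a :: s, b :: t =>
      have hab : a = b := by simpa using heq 0 (Nat.succ_pos i)
      subst hab
      refine List.Lex.cons ?_
      exact ih s t (by simpa using h1) (by simpa using h2)
        (fun j hj => by simpa using heq (j+1) (by omega)) (by simpa using hlt)

lemma append_left_le {x : List α} : ∀ {a b : List α}, a ≤ b → x ++ a ≤ x ++ b := by
  induction x with
  | nil => intro a b h; simpa using h
  | cons c x ih =>
    intro a b h
    rcases lt_or_eq_of_le (ih h) with h' | h'
    · exact le_of_lt (List.Lex.cons h')
    · simp [h']

lemma lex_append_right {y : List α} : ∀ {a b : List α}, List.Lex (·<·) a b →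
    a.length = b.length → List.Lex (·<·) (a ++ y) (b ++ y) := by
  intro a b h
  induction h with
  | nil => intro h; simp at h
  | cons _ ih => intro h; exact List.Lex.cons (ih (by simpa using h))
  | rel h => intro _; exact List.Lex.rel h

lemma append_right_le {a b y : List α} (h : a ≤ b) (hlen : a.length = b.length) :
    a ++ y ≤ b ++ y := by
  rcases lt_or_eq_of_le h with h' | h'
  · exact le_of_lt (lex_append_right h' hlen)
  · simp [h']

lemma R_lt_len {u : List α} (hu : u ≠ []) (j : ℕ) (hj : j < u.length) :
    R u j = u.getD j default := by
  unfold R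
  rw [Nat.mod_eq_of_lt hj]

lemma R_period {u : List α} (j : ℕ) (hj : u.length ≤ j) :
    R u j = R u (j - u.length) := by
  unfold R
  rw [Nat.mod_eq_sub_mod hj]

/-- The key pointwise identity: if `R u` and `R v` agree strictly below `j`,
then `(u ++ v).getD j = R u j`, for `j < |u| + |v|`. -/
lemma key_getD {u v : List α} (hu : u ≠ []) (hv : v ≠ []) (j : ℕ)
    (hj : j < u.length + v.length)
    (heq : ∀ j' < j, R u j' = R v j') :
    (u ++ v).getD j default = R u j := by
  have hul : 0 < u.length := List.length_pos_iff.2 hu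
  by_cases h : j < u.length
  · rw [List.getD_append _ _ _ _ h, R_lt_len hu j h]
  · push_neg at h
    have hjv : j - u.length < v.length := by omega
    have h1 : (u ++ v).getD j default = v.getD (j - u.length) default := by
      rw [List.getD_eq_getElem _ _ (by simp; omega), List.getElem_append_right (by omega),
        List.getD_eq_getElem _ _ (by simpa using hjv)]
    rw [h1, R_period j h, heq (j - u.length) (by omega), R_lt_len hv _ hjv]

/-- Crucial order lemma: `R u ≤ R v` implies `u ++ v ≤ v ++ u`. -/
lemma append_comm_le {u v : List α} (hu : u ≠ []) (hv : v ≠ [])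
    (h : InfLe (R u) (R v)) : u ++ v ≤ v ++ u := by
  set N := u.length + v.length with hN
  have hlen : (u ++ v).length = (v ++ u).length := by simp; omega
  have heqcase : ∀ (k : ℕ), (∀ j' < k, R u j' = R v j') → ∀ j < N, j < k →
      (u ++ v).getD j default = (v ++ u).getD j default := by
    intro k hk j hj hjk
    have h1 := key_getD hu hv j hj (fun j' hj' => hk j' (by omega))
    have h2 := key_getD hv hu j (by omega) (fun j' hj' => (hk j' (by omega)).symm)
    rw [h1, h2, hk j hjk]
  rcases h with h | ⟨i, hi, hlt⟩
  · -- R u = R v, then u ++ v = v ++ u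
    have : u ++ v = v ++ u := by
      apply eq_of_getD_eq hlen
      intro j hj
      exact heqcase (j+1) (fun j' _ => congrFun h j') j (by simpa using hj) (by omega)
    exact le_of_eq this
  · by_cases hiN : i < N
    · -- strict inequality at position i
      apply le_of_lt
      apply lt_of_getD i (u ++ v) (v ++ u) (by simpa using hiN) (by simp; omega)
      · intro j hj
        exact heqcase i hi j (by omega) hj
      · rw [key_getD hu hv i hiN hi,
          key_getD hv hu i (by omega) (fun j' hj' => (hi j' hj').symm)]
        exact hlt
    · -- they agree on all of [0, N)
      apply le_of_eq
      apply eq_of_getD_eq hlen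
      intro j hj
      exact heqcase i hi j (by simpa using hj) (by simp at hj; omega)

lemma join_front {u : List α} : ∀ {p : List (List α)},
    (∀ w ∈ p, u ++ w ≤ w ++ u) → u ++ p.flatten ≤ p.flatten ++ u := by
  intro p
  induction p with
  | nil => simp
  | cons w p ih =>
    intro h
    have h1 : u ++ w ++ p.flatten ≤ w ++ u ++ p.flatten :=
      append_right_le (h w (by simp)) (by simp [Nat.add_comm])
    have h2 : w ++ (u ++ p.flatten) ≤ w ++ (p.flatten ++ u) :=
      append_left_le (ih (fun x hx => h x (by simp [hx])))
    calc u ++ (w :: p).flatten = u ++ w ++ p.flatten := by simp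
    _ ≤ w ++ u ++ p.flatten := h1
    _ = w ++ (u ++ p.flatten) := by simp
    _ ≤ w ++ (p.flatten ++ u) := h2
    _ = (w :: p).flatten ++ u := by simp

/-- Main combinatorial lemma. -/
lemma join_le_of_perm : ∀ (L M : List (List α)), L.Perm M →
    M.Pairwise (fun a b => b ++ a ≤ a ++ b) → L.flatten ≤ M.flatten := by
  intro L
  induction L with
  | nil => intro M hP _; rw [hP.nil_eq]
  | cons u L ih =>
    intro M hP hS
    have hu : u ∈ M := hP.subset (by simp)
    obtain ⟨p, q, rfl⟩ := List.append_of_mem hu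
    have hperm : L.Perm (p ++ q) := (List.perm_cons u).1 (hP.trans List.perm_middle)
    have hS' : (p ++ q).Pairwise (fun a b => b ++ a ≤ a ++ b) :=
      hS.sublist (by simpa using (List.sublist_cons_self u q).append_left p)
    have hIH := ih (p ++ q) hperm hS'
    have hfront : ∀ w ∈ p, u ++ w ≤ w ++ u := by
      intro w hw
      have := List.pairwise_append.1 hS
      exact this.2.2 w hw u (by simp)
    calc (u :: L).flatten = u ++ L.flatten := by simp
      _ ≤ u ++ (p ++ q).flatten := append_left_le hIH
      _ = u ++ p.flatten ++ q.flatten := by simp [List.append_assoc]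
      _ ≤ p.flatten ++ u ++ q.flatten := append_right_le (join_front hfront) (by simp [Nat.add_comm])
      _ = (p ++ u :: q).flatten := by simp
end aux

theorem stmt11 {α : Type*} [LinearOrder α] [Inhabited α] (n : ℕ) (A : Fin n → List α)
    (hne : ∀ i, A i ≠ [])
    (hsorted : ∀ i j : Fin n, i ≤ j → InfLe (R (A i)) (R (A j)))
    (π : Equiv.Perm (Fin n)) :
    (List.ofFn fun i => A (π i)).flatten ≤ (List.ofFn fun i => A i.rev).flatten := by
  apply join_le_of_perm
  · have h1 : (List.ofFn (A ∘ π)).Perm (List.ofFn A) := π.ofFn_comp_perm A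
    have h2 : (List.ofFn (A ∘ Fin.revPerm)).Perm (List.ofFn A) := Fin.revPerm.ofFn_comp_perm A
    have h2' : (List.ofFn fun i : Fin n => A i.rev).Perm (List.ofFn A) := h2
    exact (h1.trans h2'.symm)
  · rw [List.pairwise_ofFn]
    intro i j hij
    apply append_comm_le (hne _) (hne _)
    apply hsorted
    exact le_of_lt (by simpa using (Fin.rev_lt_rev).2 hij)
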